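/- The complement of a coordinate subspace arrangement in ℂ^m containing the hyperplane {z_i = 0} decomposes as a product: if A is a set of coordinate subspaces of ℂ^m containing the hyperplane z_i = 0, then ℂ^m minus the union of A is homeomorphic to (ℂ^{m-1} minus the union of an induced coordinate arrangement in the hyperplane) × ℂ*. -/
import Mathlib


/-- The coordinate subspace `L_I ⊆ ℂ^m` (indexed by `Fin m`): points vanishing on `I`. -/
def coordSubspace {m : ℕ} (I : Set (Fin m)) : Set (Fin m → ℂ) :=
  {z | ∀ i ∈ I, z i = 0}

/-- The complement of an arrangement of subspaces. -/
def complementOf {m : ℕ} (A : Set (Set (Fin m → ℂ))) : Set (Fin m → ℂ) :=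
  {z | z ∉ ⋃₀ A}

/-- If a coordinate subspace arrangement `A` in `ℂ^m` contains the hyperplane
`{z | z i = 0}`, then its complement decomposes (up to homeomorphism) as the product of the
complement of an induced coordinate subspace arrangement in the hyperplane `ℂ^{m-1}` and `ℂ*`. -/
theorem complement_decomposes_of_mem_hyperplane {m : ℕ} (i : Fin m)
    (A : Set (Set (Fin m → ℂ)))
    (hA : ∀ L ∈ A, ∃ I : Set (Fin m), L = coordSubspace I)
    (hi : coordSubspace ({i} : Set (Fin m)) ∈ A) :
    ∃ A' : Set (Set ({j : Fin m // j ≠ i} → ℂ)),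
      (∀ L ∈ A', ∃ I : Set {j : Fin m // j ≠ i},
        L = {z : {j : Fin m // j ≠ i} → ℂ | ∀ j ∈ I, z j = 0}) ∧
      Nonempty ((complementOf A) ≃ₜ
        ({z : {j : Fin m // j ≠ i} → ℂ | z ∉ ⋃₀ A'} × {w : ℂ // w ≠ 0})) := by
  classical
  set A' : Set (Set ({j : Fin m // j ≠ i} → ℂ)) :=
    { S | ∃ I : Set (Fin m), coordSubspace I ∈ A ∧ i ∉ I ∧
        S = {z : {j : Fin m // j ≠ i} → ℂ | ∀ j : {j : Fin m // j ≠ i},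
          (j : Fin m) ∈ I → z j = 0} } with hA'
  refine ⟨A', ?_, ?_⟩
  · rintro L ⟨I, -, -, rfl⟩
    exact ⟨{j | (j : Fin m) ∈ I}, rfl⟩
  -- key membership characterization
  have key : ∀ z : Fin m → ℂ, z ∈ complementOf A ↔
      ((fun j : {j : Fin m // j ≠ i} => z j) ∉ ⋃₀ A' ∧ z i ≠ 0) := by
    intro z
    constructor
    · intro hz
      constructor
      · rintro ⟨S, ⟨I, hIA, hiI, rfl⟩, hzS⟩
        exact hz ⟨coordSubspace I, hIA, fun j hj =>
          hzS ⟨j, fun h => hiI (h ▸ hj)⟩ hj⟩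
      · intro h0
        exact hz ⟨coordSubspace {i}, hi, fun j hj => by
          simp only [Set.mem_singleton_iff] at hj; exact hj ▸ h0⟩
    · rintro ⟨h1, h2⟩ ⟨L, hL, hzL⟩
      obtain ⟨I, rfl⟩ := hA L hL
      by_cases hiI : i ∈ I
      · exact h2 (hzL i hiI)
      · exact h1 ⟨_, ⟨I, hL, hiI, rfl⟩, fun j hj => hzL j hj⟩
  have hG : ∀ p : {z : {j : Fin m // j ≠ i} → ℂ | z ∉ ⋃₀ A'} × {w : ℂ // w ≠ 0},
      (fun j => if h : j = i then p.2.1 else p.1.1 ⟨j, h⟩) ∈ complementOf A := by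
    intro p
    rw [key]
    constructor
    · convert p.1.2 using 2
      funext j
      exact dif_neg j.2
    · simpa using p.2.2
  let F : complementOf A → {z : {j : Fin m // j ≠ i} → ℂ | z ∉ ⋃₀ A'} × {w : ℂ // w ≠ 0} :=
    fun z => (⟨fun j => z.1 j, ((key z.1).1 z.2).1⟩, ⟨z.1 i, ((key z.1).1 z.2).2⟩)
  let G : {z : {j : Fin m // j ≠ i} → ℂ | z ∉ ⋃₀ A'} × {w : ℂ // w ≠ 0} → complementOf A :=
    fun p => ⟨fun j => if h : j = i then p.2.1 else p.1.1 ⟨j, h⟩, hG p⟩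
  refine ⟨⟨⟨F, G, ?_, ?_⟩, ?_, ?_⟩⟩
  · intro z
    ext j
    show (if h : j = i then _ else _) = z.1 j
    split_ifs with h
    · subst h; rfl
    · rfl
  · intro p
    refine Prod.ext (Subtype.ext (funext fun j => ?_)) (Subtype.ext ?_)
    · exact dif_neg j.2
    · show (if h : i = i then _ else _) = p.2.1
      rw [dif_pos rfl]
  · refine Continuous.prodMk (Continuous.subtype_mk ?_ _) (Continuous.subtype_mk ?_ _)
    · exact continuous_pi fun j => (continuous_apply (j : Fin m)).comp continuous_subtype_val
    · exact (continuous_apply i).comp continuous_subtype_val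
  · refine Continuous.subtype_mk (continuous_pi fun j => ?_) _
    by_cases h : j = i
    · simp only [dif_pos h]
      exact continuous_subtype_val.comp continuous_snd
    · simp only [dif_neg h]
      exact ((continuous_apply _).comp continuous_subtype_val).comp continuous_fst
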